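/- Let A = {L_0, L_1, …, L_n} be a line arrangement in ℙ²(ℂ) such that every point of multiplicity at least 3 in A lies on the single line L_0 (type C_k with k ≤ 1). Then every rank one local system on the complement M is admissible. -/

import Mathlib

noncomputable section

open Finset Complex

attribute [local instance] Classical.propDecidable

/-- The complex projective plane ℙ²(ℂ). -/
abbrev PP : Type := Projectivization ℂ (Fin 3 → ℂ)

/-- A projective line in ℙ²(ℂ), given as a nonzero linear form up to scalar. -/
abbrev PLine : Type := Projectivization ℂ (Module.Dual ℂ (Fin 3 → ℂ))

/-- Membership of a point on a projective line. -/
def memL (p : PP) (L : PLine) : Prop := L.rep p.rep = 0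

/-- A point has multiplicity at least 3 in the arrangement `L`. -/
def multGe3 {N : ℕ} (L : Fin N → PLine) (p : PP) : Prop :=
  3 ≤ (Finset.univ.filter fun j => memL p (L j)).card

/-- The strictly positive integers, inside ℂ. -/
def PosIntC : Set ℂ := {z | ∃ m : ℤ, 0 < m ∧ z = (m : ℂ)}

/-- The strictly positive integers, inside ℝ. -/
def PosIntR : Set ℝ := {x | ∃ m : ℤ, 0 < m ∧ x = (m : ℝ)}

/-- `a(p)`: the sum of residues over lines through `p`. -/
def aSum {N : ℕ} (L : Fin N → PLine) (a : Fin N → ℂ) (p : PP) : ℂ :=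
  ∑ j ∈ Finset.univ.filter (fun j => memL p (L j)), a j

/-- Admissibility of the rank one local system with monodromies `lam`. -/
def Admissible {N : ℕ} (L : Fin N → PLine) (lam : Fin N → ℂˣ) : Prop :=
  ∃ a : Fin N → ℂ,
    (∀ j, Complex.exp (2 * (Real.pi : ℂ) * Complex.I * a j) = (lam j : ℂ)) ∧
    (∑ j, a j = 0) ∧
    (∀ j, a j ∉ PosIntC) ∧
    (∀ p : PP, multGe3 L p → aSum L a p ∉ PosIntC)

/-- A normalized logarithm of `z` divided by `2πi`, with real part in `[0,1)`. -/
noncomputable def resid (z : ℂ) : ℂ :=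
  Complex.log z / (2 * (Real.pi : ℂ) * Complex.I) + (if z.arg < 0 then 1 else 0)

lemma exp_resid {z : ℂ} (hz : z ≠ 0) :
    Complex.exp (2 * (Real.pi : ℂ) * Complex.I * resid z) = z := by
  have h2 : (2 * (Real.pi : ℂ) * Complex.I) ≠ 0 := by
    simp [Real.pi_ne_zero, Complex.I_ne_zero]
  unfold resid
  rw [mul_add, mul_div_cancel₀ _ h2, Complex.exp_add, Complex.exp_log hz]
  split <;> simp [Complex.exp_two_pi_mul_I]

lemma resid_re_bounds (z : ℂ) : 0 ≤ (resid z).re ∧ (resid z).re < 1 := by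
  have hpi : (0:ℝ) < Real.pi := Real.pi_pos
  have h2pi : (0:ℝ) < 2 * Real.pi := by linarith
  have harg1 : z.arg ≤ Real.pi := Complex.arg_le_pi z
  have harg2 : -Real.pi < z.arg := Complex.neg_pi_lt_arg z
  have hre : (resid z).re = z.arg / (2 * Real.pi) + (if z.arg < 0 then 1 else 0) := by
    unfold resid
    rw [Complex.add_re]
    congr 1
    · rw [Complex.div_re]
      simp [Complex.normSq, Complex.log_im]
      field_simp
    · split <;> simp
  have hq : z.arg / (2*Real.pi) * (2*Real.pi) = z.arg := div_mul_cancel₀ _ (ne_of_gt h2pi)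
  rw [hre]
  split <;> rename_i h
  · constructor
    · nlinarith
    · have := div_neg_of_neg_of_pos h h2pi
      linarith
  · push_neg at h
    have h1 : z.arg / (2*Real.pi) < 1 := (div_lt_one h2pi).mpr (by linarith)
    constructor
    · positivity
    · linarith

lemma posIntC_one_le_re {z : ℂ} (hz : z ∈ PosIntC) : 1 ≤ z.re := by
  obtain ⟨m, hm, rfl⟩ := hz
  simp only [Complex.intCast_re]
  exact_mod_cast hm

/-- If every point of multiplicity at least 3 of the line arrangement
`A = {L 0, …, L n}` in `ℙ²(ℂ)` lies on the single line `L 0`, then every rank one local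
system on the complement is admissible. -/
theorem admissible_of_classC1 {n : ℕ} (L : Fin (n + 1) → PLine)
    (hdist : Function.Injective L)
    (hcov : ∀ p : PP, multGe3 L p → memL p (L 0))
    (lam : Fin (n + 1) → ℂˣ) (hlam : ∏ j, lam j = 1) :
    Admissible L lam := by
  classical
  set b : Fin (n + 1) → ℂ := fun j => resid (lam j : ℂ) with hb
  set a : Fin (n + 1) → ℂ := fun j =>
    if j = 0 then -(∑ k ∈ Finset.univ.erase 0, b k) else b j with ha
  have ha0 : a 0 = -(∑ k ∈ Finset.univ.erase 0, b k) := by simp [ha]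
  have haj : ∀ j : Fin (n+1), j ≠ 0 → a j = b j := fun j hj => by simp [ha, hj]
  refine ⟨a, ?_, ?_, ?_, ?_⟩
  · intro j
    by_cases hj : j = 0
    · subst hj
      rw [ha0]
      have hprod : ∏ k ∈ Finset.univ.erase (0 : Fin (n+1)), (lam k : ℂ) = (lam 0 : ℂ)⁻¹ := by
        have h1 : (lam 0 : ℂ) * ∏ k ∈ Finset.univ.erase (0 : Fin (n+1)), (lam k : ℂ) = 1 := by
          rw [Finset.mul_prod_erase Finset.univ (fun k : Fin (n+1) => ((lam k : ℂ))) (Finset.mem_univ 0)]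
          norm_cast
          rw [hlam, Units.val_one]
        field_simp at h1 ⊢
        linear_combination h1
      rw [mul_neg, mul_comm, Finset.sum_mul, Complex.exp_neg, Complex.exp_sum]
      have : ∀ k ∈ Finset.univ.erase (0 : Fin (n+1)),
          Complex.exp (b k * (2 * (Real.pi : ℂ) * Complex.I)) = (lam k : ℂ) := by
        intro k _
        rw [mul_comm]
        exact exp_resid (Units.ne_zero (lam k))
      rw [Finset.prod_congr rfl this, hprod, inv_inv]
    · rw [haj j hj]
      exact exp_resid (Units.ne_zero (lam j))
  · rw [← Finset.add_sum_erase Finset.univ a (Finset.mem_univ 0), ha0]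
    rw [Finset.sum_congr rfl (fun k hk => haj k (Finset.ne_of_mem_erase hk))]
    ring
  · intro j hj
    have h1 := posIntC_one_le_re hj
    by_cases h0 : j = 0
    · subst h0
      rw [ha0] at h1
      have : (∑ k ∈ Finset.univ.erase (0 : Fin (n+1)), b k).re =
          ∑ k ∈ Finset.univ.erase (0 : Fin (n+1)), (b k).re := by
        exact Complex.re_sum _ _
      rw [Complex.neg_re, this] at h1
      have hnn : 0 ≤ ∑ k ∈ Finset.univ.erase (0 : Fin (n+1)), (b k).re :=
        Finset.sum_nonneg fun k _ => (resid_re_bounds _).1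
      linarith
    · rw [haj j h0] at h1
      have := (resid_re_bounds (lam j : ℂ)).2
      linarith
  · intro p hp hmem
    have h1 := posIntC_one_le_re hmem
    set S := Finset.univ.filter (fun j => memL p (L j)) with hS
    have h0S : (0 : Fin (n+1)) ∈ S := by
      rw [hS]; exact Finset.mem_filter.mpr ⟨Finset.mem_univ _, hcov p hp⟩
    have hsum : aSum L a p = a 0 + ∑ j ∈ S.erase 0, a j := by
      rw [aSum, ← hS, ← Finset.add_sum_erase S a h0S]
    rw [hsum, ha0] at h1
    rw [Finset.sum_congr rfl (fun k hk => haj k (Finset.ne_of_mem_erase hk))] at h1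
    rw [Complex.add_re, Complex.neg_re, Complex.re_sum, Complex.re_sum] at h1
    have hsub : S.erase 0 ⊆ Finset.univ.erase 0 :=
      Finset.erase_subset_erase _ (Finset.subset_univ S)
    have hle : ∑ k ∈ S.erase 0, (b k).re ≤ ∑ k ∈ Finset.univ.erase (0:Fin (n+1)), (b k).re :=
      Finset.sum_le_sum_of_subset_of_nonneg hsub fun k _ _ => (resid_re_bounds _).1
    linarith
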